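/- Let a be a positive integer and b, d be nonzero integers. Suppose p is a prime such that v_p(a) > max{v_p(b), v_p(d)} and v_p(b) ≠ v_p(d). Then there exist a completely multiplicative unimodular function f, a real ε > 0, and a positive integer N such that for every n ≥ N one has a n + b ≥ 1, a n + d ≥ 1, and |f(a n + b) − f(a n + d)| ≥ ε; in particular liminf_{n→∞} |f(a n + b) − f(a n + d)| > 0. -/

import Mathlib

open MeasureTheory Filter

/-- `f` is completely multiplicative and unimodular on the positive integers. -/
def CompMultUnimodular (f : ℕ → ℂ) : Prop :=
  (∀ n : ℕ, 1 ≤ n → ‖f n‖ = 1) ∧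
  (∀ m n : ℕ, 1 ≤ m → 1 ≤ n → f (m * n) = f m * f n)

lemma exp_I_nat_ne (k l : ℕ) (h : k ≠ l) :
    Complex.exp (Complex.I * k) ≠ Complex.exp (Complex.I * l) := by
  intro heq
  rw [Complex.exp_eq_exp_iff_exists_int] at heq
  obtain ⟨n, hn⟩ := heq
  have hIne : (Complex.I : ℂ) ≠ 0 := Complex.I_ne_zero
  have h2 : (k : ℂ) = (l : ℂ) + n * (2 * Real.pi) := by
    have : Complex.I * k = Complex.I * ((l : ℂ) + n * (2 * Real.pi)) := by
      rw [hn]; ring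
    exact mul_left_cancel₀ hIne this
  have h3 : (k : ℝ) = (l : ℝ) + n * (2 * Real.pi) := by
    exact_mod_cast congrArg Complex.re h2
  rcases eq_or_ne n 0 with hn0 | hn0
  · simp [hn0] at h3
    exact h (by exact_mod_cast h3)
  · apply Rat.not_irrational (((k : ℚ) - l) / (2 * n))
    have hnR : (n : ℝ) ≠ 0 := Int.cast_ne_zero.2 hn0
    have hpi : ((((k : ℚ) - l) / (2 * n) : ℚ) : ℝ) = Real.pi := by
      push_cast
      field_simp
      linarith [h3]
    rw [hpi]
    exact irrational_pi

lemma val_add_eq {p : ℕ} [Fact p.Prime] (x y : ℤ) (hx : x ≠ 0) {m : ℕ}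
    (hm : padicValInt p x = m)
    (h : (p : ℤ) ^ (m + 1) ∣ y) :
    padicValInt p (y + x) = m := by
  have hxy : y + x ≠ 0 := by
    intro h0
    have hxe : x = -y := by omega
    have : (p : ℤ) ^ (m + 1) ∣ x := by rw [hxe]; exact dvd_neg.2 h
    rcases (padicValInt_dvd_iff _ _).1 this with h1 | h1
    · exact hx h1
    · omega
  have hk : (p:ℤ) ^ m ∣ y + x := by
    have := padicValInt_dvd (p := p) x
    rw [hm] at this
    exact dvd_add (dvd_trans (pow_dvd_pow _ (Nat.le_succ _)) h) this
  have hk1 : ¬ (p:ℤ) ^ (m + 1) ∣ y + x := by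
    intro hdvd
    have : (p:ℤ) ^ (m + 1) ∣ x := by simpa using dvd_sub hdvd h
    rcases (padicValInt_dvd_iff _ _).1 this with h1 | h1
    · exact hx h1
    · omega
  have h1 : m ≤ padicValInt p (y + x) := by
    rcases (padicValInt_dvd_iff _ _).1 hk with h1 | h1
    · exact absurd h1 hxy
    · exact h1
  have h2 : padicValInt p (y + x) ≤ m := by
    by_contra hlt
    exact hk1 ((padicValInt_dvd_iff _ _).2 (Or.inr (by omega)))
  omega

theorem separation_of_distinct_valuation
    (a : ℕ) (ha : 0 < a) (b d : ℤ) (hb : b ≠ 0) (hd : d ≠ 0)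
    (p : ℕ) (hp : p.Prime)
    (hval : max (padicValInt p b) (padicValInt p d) < padicValInt p (a : ℤ))
    (hne : padicValInt p b ≠ padicValInt p d) :
    ∃ f : ℕ → ℂ, CompMultUnimodular f ∧ ∃ ε : ℝ, 0 < ε ∧ ∃ N : ℕ, 0 < N ∧
      ∀ n : ℕ, N ≤ n → 1 ≤ (a : ℤ) * n + b ∧ 1 ≤ (a : ℤ) * n + d ∧
        ε ≤ ‖f (((a : ℤ) * n + b).toNat) - f (((a : ℤ) * n + d).toNat)‖ := by
  haveI : Fact p.Prime := ⟨hp⟩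
  set k := padicValInt p b with hk
  set l := padicValInt p d with hl
  refine ⟨fun n => Complex.exp (Complex.I * (padicValNat p n : ℂ)), ⟨?_, ?_⟩, ?_⟩
  · intro n _
    rw [Complex.norm_exp]
    simp
  · intro m n hm hn
    show Complex.exp (Complex.I * (padicValNat p (m * n) : ℂ)) = _
    rw [padicValNat.mul (show m ≠ 0 by omega) (show n ≠ 0 by omega), ← Complex.exp_add]
    push_cast
    ring_nf
  · refine ⟨‖Complex.exp (Complex.I * k) - Complex.exp (Complex.I * l)‖, ?_,
      b.natAbs + d.natAbs + 1, by omega, ?_⟩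
    · rw [norm_pos_iff, sub_ne_zero]
      exact exp_I_nat_ne k l hne
    · intro n hn
      have hab : (1:ℤ) ≤ (a : ℤ) * n + b := by
        have : (n:ℤ) ≤ (a:ℤ) * n := by
          have := Nat.one_le_iff_ne_zero.2 (by omega : a ≠ 0)
          nlinarith [Int.natCast_nonneg n, (by exact_mod_cast this : (1:ℤ) ≤ (a:ℤ))]
        have hbn : -(b.natAbs : ℤ) ≤ b := by omega
        have : (b.natAbs + d.natAbs + 1 : ℤ) ≤ (a:ℤ) * n := by
          calc (b.natAbs + d.natAbs + 1 : ℤ) ≤ n := by exact_mod_cast hn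
          _ ≤ (a:ℤ) * n := this
        omega
      have had : (1:ℤ) ≤ (a : ℤ) * n + d := by
        have : (n:ℤ) ≤ (a:ℤ) * n := by
          nlinarith [Int.natCast_nonneg n,
            (by exact_mod_cast Nat.one_le_iff_ne_zero.2 (by omega : a ≠ 0) : (1:ℤ) ≤ (a:ℤ))]
        have : (b.natAbs + d.natAbs + 1 : ℤ) ≤ (a:ℤ) * n := by
          calc (b.natAbs + d.natAbs + 1 : ℤ) ≤ n := by exact_mod_cast hn
          _ ≤ (a:ℤ) * n := this
        omega
      refine ⟨hab, had, ?_⟩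
      have hdvd : ∀ m : ℕ, m < padicValInt p (a:ℤ) → (p:ℤ) ^ (m + 1) ∣ (a:ℤ) * n :=
        fun m hm => Dvd.dvd.mul_right
          ((padicValInt_dvd_iff _ _).2 (Or.inr (by omega))) _
      have hvb : padicValInt p ((a:ℤ) * n + b) = k :=
        val_add_eq _ _ hb hk.symm (hdvd k (by omega))
      have hvd : padicValInt p ((a:ℤ) * n + d) = l :=
        val_add_eq _ _ hd hl.symm (hdvd l (by omega))
      have hnb : padicValNat p (((a:ℤ) * n + b).toNat) = k := by
        rw [show ((a:ℤ) * n + b).toNat = ((a:ℤ) * n + b).natAbs by omega]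
        exact hvb
      have hnd : padicValNat p (((a:ℤ) * n + d).toNat) = l := by
        rw [show ((a:ℤ) * n + d).toNat = ((a:ℤ) * n + d).natAbs by omega]
        exact hvd
      simp only [hnb, hnd, le_refl]
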